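/- Let t be a non-source node of a finite directed acyclic graph G with source s, n = mincut(s,t), and CUT₁ ≤ CUT₂ two minimum cuts between s and t with CUT₁ separating CUT₂ from s. Then for ANY choice of n edge-disjoint paths P₁, …, P_n from s to t, writing P_i ∩ CUT₁ = {e₁ᵢ} and P_i ∩ CUT₂ = {e₂ᵢ}, one has e₁ᵢ ≤ e₂ᵢ for all i = 1, …, n. -/

import Mathlib

open Finset

/-- Consecutive edges in the list match head-to-tail. -/
def EChain {V E : Type*} (tl hd : E → V) (p : List E) : Prop :=
  p.Chain' (fun d e => hd d = tl e)

/-- A (nonempty) directed path of edges starting at node `s`. -/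
def PathFrom {V E : Type*} (tl hd : E → V) (s : V) (p : List E) : Prop :=
  p ≠ [] ∧ EChain tl hd p ∧ ∀ e ∈ p.head?, tl e = s

/-- The directed graph is acyclic: no nonempty edge-chain returns to its start. -/
def Acyclic {V E : Type*} (tl hd : E → V) : Prop :=
  ∀ p : List E, p ≠ [] → EChain tl hd p →
    ∀ d ∈ p.head?, ∀ e ∈ p.getLast?, hd e ≠ tl d

/-- `B` separates the edge set `A` from `s`: every directed path from `s`
ending with an edge of `A` passes through an edge of `B` (i.e. `B` is a cut
between `s` and `A`). -/
def Separates {V E : Type*} (tl hd : E → V) (s : V) (A B : Finset E) : Prop :=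
  ∀ p : List E, PathFrom tl hd s p → (∃ e ∈ p.getLast?, e ∈ A) → ∃ b ∈ B, b ∈ p

/-- The minimum cut capacity between `s` and the edge set `A`. -/
noncomputable def mincut {V E : Type*} [Fintype E] (tl hd : E → V) (s : V)
    (A : Finset E) : ℕ :=
  sInf {n | ∃ B : Finset E, Separates tl hd s A B ∧ B.card = n}

/-- `B` is a minimum cut between `s` and the edge set `A`. -/
def IsMinCut {V E : Type*} [Fintype E] (tl hd : E → V) (s : V) (A B : Finset E) : Prop :=
  Separates tl hd s A B ∧ B.card = mincut tl hd s A

/-- An edge set is regular if its cardinality equals its minimum cut capacity from `s`. -/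
def Regular {V E : Type*} [Fintype E] (tl hd : E → V) (s : V) (A : Finset E) : Prop :=
  A.card = mincut tl hd s A

/-- `A ∼ A'`: the two edge sets have a common minimum cut from `s`. -/
def EquivSets {V E : Type*} [Fintype E] (tl hd : E → V) (s : V) (A A' : Finset E) : Prop :=
  ∃ C : Finset E, IsMinCut tl hd s A C ∧ IsMinCut tl hd s A' C

/-- `A₁ ≺ A₂`: `|A₁| < |A₂|` and some minimum cut between `s` and `A₂`
also separates `A₁` from `s`. -/
def Dominates {V E : Type*} [Fintype E] (tl hd : E → V) (s : V) (A₁ A₂ : Finset E) : Prop :=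
  A₁.card < A₂.card ∧
    ∃ C : Finset E, IsMinCut tl hd s A₂ C ∧ Separates tl hd s A₁ C

/-- A directed path of edges from node `s` to node `t`. -/
def NPathFromTo {V E : Type*} (tl hd : E → V) (s t : V) (p : List E) : Prop :=
  PathFrom tl hd s p ∧ ∀ e ∈ p.getLast?, hd e = t

/-- `B` is a cut between the nodes `s` and `t`. -/
def NSeparates {V E : Type*} (tl hd : E → V) (s t : V) (B : Finset E) : Prop :=
  ∀ p : List E, NPathFromTo tl hd s t p → ∃ b ∈ B, b ∈ p

/-- The minimum cut capacity between the nodes `s` and `t`. -/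
noncomputable def nmincut {V E : Type*} [Fintype E] (tl hd : E → V) (s t : V) : ℕ :=
  sInf {n | ∃ B : Finset E, NSeparates tl hd s t B ∧ B.card = n}

/-- `B` is a minimum cut between the nodes `s` and `t`. -/
def IsNodeMinCut {V E : Type*} [Fintype E] (tl hd : E → V) (s t : V) (B : Finset E) : Prop :=
  NSeparates tl hd s t B ∧ B.card = nmincut tl hd s t

/-- `d ≤ e` for edges: there is a directed path starting with `d` and ending with `e`
(in particular `d ≤ d`). -/
def EdgeLe {V E : Type*} (tl hd : E → V) (d e : E) : Prop :=
  ∃ p : List E, EChain tl hd p ∧ p.head? = some d ∧ p.getLast? = some e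

/-- A family of pairwise edge-disjoint paths. -/
def EdgeDisjoint {E : Type*} {n : ℕ} (P : Fin n → List E) : Prop :=
  ∀ i j, i ≠ j → List.Disjoint (P i) (P j)

/-- The primary minimum cut between nodes `s` and `t`: a minimum cut separating
every minimum cut between `s` and `t` from `s`. -/
def IsPrimaryNodeMinCut {V E : Type*} [Fintype E] (tl hd : E → V) (s t : V)
    (C : Finset E) : Prop :=
  IsNodeMinCut tl hd s t C ∧
    ∀ C' : Finset E, IsNodeMinCut tl hd s t C' → Separates tl hd s C' C

/-- The primary minimum cut between `s` and an edge set `A`. -/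
def IsPrimaryMinCut {V E : Type*} [Fintype E] (tl hd : E → V) (s : V)
    (A C : Finset E) : Prop :=
  IsMinCut tl hd s A C ∧
    ∀ C' : Finset E, IsMinCut tl hd s A C' → Separates tl hd s C' C

/-- The equivalence class (within the collection `𝒜`) of the wiretap set `A`
under the relation `∼`. -/
def ClassOf {V E : Type*} [Fintype E] (tl hd : E → V) (s : V)
    (𝒜 : Finset (Finset E)) (A : Finset E) : Set (Finset E) :=
  {A' | A' ∈ 𝒜 ∧ EquivSets tl hd s A A'}

/-- Domination amongst (distinct) equivalence classes: some common minimum cut of all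
the sets in `C₂` separates every set in `C₁` from `s`. -/
def ClDominates {V E : Type*} [Fintype E] (tl hd : E → V) (s : V)
    (C₁ C₂ : Set (Finset E)) : Prop :=
  C₁ ≠ C₂ ∧ ∃ CUT : Finset E,
    (∀ A ∈ C₂, IsMinCut tl hd s A CUT) ∧ (∀ A ∈ C₁, Separates tl hd s A CUT)



/-- Counting lemma: a cut of cardinality `n` meets each of `n` edge-disjoint
`s`-`t` paths in at most one edge. -/
lemma unique_cut_edge {V E : Type*} [Fintype E] (tl hd : E → V) (s t : V)
    (C : Finset E) (hsep : NSeparates tl hd s t C)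
    (hcard : C.card = nmincut tl hd s t)
    (P : Fin (nmincut tl hd s t) → List E)
    (hP : ∀ i, NPathFromTo tl hd s t (P i)) (hdisj : EdgeDisjoint P) :
    ∀ i, ∀ b ∈ P i, ∀ c ∈ P i, b ∈ C → c ∈ C → b = c := by
  classical
  have hex : ∀ j, ∃ e, e ∈ C ∧ e ∈ P j := by
    intro j
    obtain ⟨b, hb, hbp⟩ := hsep (P j) (hP j)
    exact ⟨b, hb, hbp⟩
  set f : Fin (nmincut tl hd s t) → E := fun j => (hex j).choose with hf
  have hfC : ∀ j, f j ∈ C := fun j => (hex j).choose_spec.1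
  have hfP : ∀ j, f j ∈ P j := fun j => (hex j).choose_spec.2
  have hinj : Function.Injective f := by
    intro j k hjk
    by_contra hne
    exact hdisj j k hne (hjk ▸ hfP j) (hfP k)
  have himg : Finset.univ.image f = C := by
    apply Finset.eq_of_subset_of_card_le
    · intro x hx
      obtain ⟨j, _, rfl⟩ := Finset.mem_image.mp hx
      exact hfC j
    · rw [Finset.card_image_of_injective _ hinj, Finset.card_univ, Fintype.card_fin, hcard]
  have hsurj : ∀ b ∈ C, ∃ j, f j = b := by
    intro b hb
    obtain ⟨j, _, hj⟩ := Finset.mem_image.mp (himg ▸ hb)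
    exact ⟨j, hj⟩
  intro i b hbP c hcP hbC hcC
  obtain ⟨j, rfl⟩ := hsurj b hbC
  obtain ⟨k, rfl⟩ := hsurj c hcC
  have hji : j = i := by
    by_contra hne
    exact hdisj j i hne (hfP j) hbP
  have hki : k = i := by
    by_contra hne
    exact hdisj k i hne (hfP k) hcP
  rw [hji, hki]

/-- if `CUT₁ ≤ CUT₂`, then on ANY choice of `n = mincut(s,t)`
edge-disjoint paths from `s` to `t`, the edge of `CUT₁` precedes (or equals) the
edge of `CUT₂` on each path. -/

theorem cut_le_forall_paths {V E : Type*} [Fintype E] (tl hd : E → V) (s t : V)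
    (hacy : Acyclic tl hd) (hsrc : ∀ e : E, hd e ≠ s) (hts : t ≠ s)
    (CUT₁ CUT₂ : Finset E)
    (h₁ : IsNodeMinCut tl hd s t CUT₁) (h₂ : IsNodeMinCut tl hd s t CUT₂)
    (hle : Separates tl hd s CUT₂ CUT₁)
    (P : Fin (nmincut tl hd s t) → List E)
    (hP : ∀ i, NPathFromTo tl hd s t (P i)) (hdisj : EdgeDisjoint P) :
    ∀ i, ∀ e₁ ∈ P i, ∀ e₂ ∈ P i, e₁ ∈ CUT₁ → e₂ ∈ CUT₂ → EdgeLe tl hd e₁ e₂ := by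
  intro i e₁ he₁P e₂ he₂P he₁C he₂C
  classical
  have huniq := unique_cut_edge tl hd s t CUT₁ h₁.1 h₁.2 P hP hdisj
  -- split the path at e₂
  obtain ⟨l₁, l₂, hsplit⟩ := List.append_of_mem he₂P
  set q : List E := l₁ ++ [e₂] with hq
  have hqne : q ≠ [] := by simp [hq]
  have hqpre : q <+: P i := ⟨l₂, by simp [hq, hsplit]⟩
  have hqsub : ∀ x ∈ q, x ∈ P i := fun x hx => hqpre.subset hx
  have hpath : PathFrom tl hd s q := by
    obtain ⟨⟨hne, hchain, hhead⟩, _⟩ := hP i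
    refine ⟨hqne, hchain.prefix hqpre, ?_⟩
    intro e he
    apply hhead
    obtain ⟨r, hr⟩ := hqpre
    rw [← hr, List.head?_append_of_ne_nil _ hqne]
    exact he
  have hlast : q.getLast? = some e₂ := List.getLast?_concat
  obtain ⟨b, hbC, hbq⟩ := hle q hpath ⟨e₂, by simp [hlast], he₂C⟩
  have hbe : b = e₁ := huniq i b (hqsub b hbq) e₁ he₁P hbC he₁C
  -- e₁ ∈ q; take the suffix of q starting at e₁
  have he₁q : e₁ ∈ q := hbe ▸ hbq
  obtain ⟨m₁, m₂, hm⟩ := List.append_of_mem he₁q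
  refine ⟨e₁ :: m₂, ?_, rfl, ?_⟩
  · have : EChain tl hd q := hpath.2.1
    exact this.suffix ⟨m₁, hm.symm⟩
  · have : (e₁ :: m₂).getLast? = q.getLast? := by
      rw [hm, List.getLast?_append_of_ne_nil _ (List.cons_ne_nil _ _)]
    rw [this, hlast]
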